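/- Let E be a finite-dimensional real inner product space, Φ : E → ℝ twice continuously differentiable with Φ ≥ 0, and ρ : [0,∞) → (0,∞) differentiable and monotone nondecreasing such that the operator norm of the Hessian satisfies ‖∇²Φ(u)‖ ≤ ρ(Φ(u)) for all u ∈ E. Let θ : [0,∞) → ℝ be the function with θ(0) = 0 and θ'(z) = 1/ρ(z) for all z ≥ 0. Then: (1) for all w, u ∈ E, θ(Φ(w + u)) ≤ θ(Φ(w)) + ⟨∇Φ(w), u⟩/ρ(Φ(w)) + ‖u‖²/2; and (2) for all w ∈ E, ‖∇Φ(w)‖ ≤ ρ(Φ(w))·√(2θ(Φ(w))). -/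

import Mathlib

open RealInnerProductSpace

/-- One-sided smoothness alternative to Taylor expansion for self-bounded potentials,
and the resulting gradient bound. -/
theorem theta_one_sided_smooth_and_gradient_bound
    {E : Type*} [NormedAddCommGroup E] [InnerProductSpace ℝ E] [FiniteDimensional ℝ E]
    (Φ : E → ℝ) (hΦ : ContDiff ℝ 2 Φ) (hΦnonneg : ∀ u, 0 ≤ Φ u)
    (ρ : ℝ → ℝ) (hρpos : ∀ z : ℝ, 0 ≤ z → 0 < ρ z)
    (hρmono : MonotoneOn ρ (Set.Ici 0)) (hρdiff : DifferentiableOn ℝ ρ (Set.Ici 0))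
    (hHess : ∀ u : E, ‖fderiv ℝ (gradient Φ) u‖ ≤ ρ (Φ u))
    (θ : ℝ → ℝ) (hθ0 : θ 0 = 0)
    (hθ' : ∀ z : ℝ, 0 ≤ z → HasDerivAt θ (1 / ρ z) z) :
    (∀ w u : E,
      θ (Φ (w + u)) ≤ θ (Φ w) + ⟪gradient Φ w, u⟫ / ρ (Φ w) + ‖u‖ ^ 2 / 2) ∧
    (∀ w : E, ‖gradient Φ w‖ ≤ ρ (Φ w) * Real.sqrt (2 * θ (Φ w))) := by
  have hΦd : Differentiable ℝ Φ := hΦ.differentiable two_ne_zero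
  have hGd : Differentiable ℝ (gradient Φ) := by
    have h1 : ContDiff ℝ 1 (fderiv ℝ Φ) := hΦ.fderiv_right (by norm_num)
    exact fun x =>
      ((InnerProductSpace.toDual ℝ E).symm.toContinuousLinearEquiv.differentiable.differentiableAt).comp
        x (h1.differentiable one_ne_zero x)
  -- nonnegativity of the one-sided derivative of ρ on [0, ∞)
  set D : ℝ → ℝ := fun z => derivWithin ρ (Set.Ici 0) z with hD
  have hρz : ∀ z : ℝ, 0 ≤ z → HasDerivWithinAt ρ (D z) (Set.Ici 0) z :=
    fun z hz => (hρdiff z hz).hasDerivWithinAt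
  have hDnonneg : ∀ z : ℝ, 0 ≤ z → 0 ≤ D z := by
    intro z hz
    have ht := hasDerivWithinAt_iff_tendsto_slope.1 (hρz z hz)
    have hne : (nhdsWithin z (Set.Ici 0 \ {z})).NeBot := by
      refine Filter.neBot_of_le (f := nhdsWithin z (Set.Ioi z)) (nhdsWithin_mono _ ?_)
      intro y hy
      refine ⟨le_trans hz (le_of_lt hy), ?_⟩
      simp only [Set.mem_singleton_iff]
      exact ne_of_gt hy
    refine ge_of_tendsto ht ?_
    filter_upwards [self_mem_nhdsWithin] with y hy
    obtain ⟨hy0, hyz⟩ := hy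
    have hy0' : (0:ℝ) ≤ y := hy0
    rw [slope_def_field]
    rcases lt_or_gt_of_ne (show y ≠ z by simpa using hyz) with h | h
    · have h1 : ρ y ≤ ρ z := hρmono hy0' hz h.le
      exact div_nonneg_iff.2 (Or.inr ⟨by linarith, by linarith⟩)
    · have h1 : ρ z ≤ ρ y := hρmono hz hy0' h.le
      exact div_nonneg (by linarith) (by linarith)
  -- Part 1
  have key : ∀ w u : E,
      θ (Φ (w + u)) ≤ θ (Φ w) + ⟪gradient Φ w, u⟫ / ρ (Φ w) + ‖u‖ ^ 2 / 2 := by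
    intro w u
    set c : ℝ → E := fun t => w + t • u with hcdef
    set G : ℝ → E := fun t => gradient Φ (c t) with hGdef
    set A : ℝ → (E →L[ℝ] E) := fun t => fderiv ℝ (gradient Φ) (c t) with hAdef
    have hc : ∀ t : ℝ, HasDerivAt c u t := by
      intro t
      simpa [hcdef] using ((hasDerivAt_id t).smul_const u).const_add w
    have hρcpos : ∀ t : ℝ, 0 < ρ (Φ (c t)) := fun t => hρpos _ (hΦnonneg _)
    have hΦc : ∀ t : ℝ, HasDerivAt (fun s => Φ (c s)) ⟪G t, u⟫ t := by
      intro t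
      have := ((hΦd (c t)).hasGradientAt.hasFDerivAt).comp_hasDerivAt t (hc t)
      simpa [hGdef, Function.comp_def] using this
    have hGc : ∀ t : ℝ, HasDerivAt (fun s => G s) (A t u) t := by
      intro t
      exact ((hGd (c t)).hasFDerivAt).comp_hasDerivAt t (hc t)
    have hIc : ∀ t : ℝ, HasDerivAt (fun s => ⟪G s, u⟫) ⟪A t u, u⟫ t := by
      intro t
      have := (hGc t).inner ℝ (hasDerivAt_const t u)
      simpa using this
    have hρc : ∀ t : ℝ, HasDerivAt (fun s => ρ (Φ (c s))) (⟪G t, u⟫ * D (Φ (c t))) t := by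
      intro t
      have := (hρz (Φ (c t)) (hΦnonneg _)).scomp_hasDerivAt t (hΦc t)
        (fun s => hΦnonneg (c s))
      simpa [smul_eq_mul, Function.comp_def] using this
    -- the function h(t) = ⟪∇Φ(c t), u⟫ / ρ(Φ(c t))
    set h : ℝ → ℝ := fun t => ⟪G t, u⟫ / ρ (Φ (c t)) with hhdef
    have hh : ∀ t : ℝ, HasDerivAt h
        ((⟪A t u, u⟫ * ρ (Φ (c t)) - ⟪G t, u⟫ * (⟪G t, u⟫ * D (Φ (c t)))) / ρ (Φ (c t)) ^ 2) t :=
      fun t => (hIc t).div (hρc t) (hρcpos t).ne'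
    have hhbound : ∀ t : ℝ,
        (⟪A t u, u⟫ * ρ (Φ (c t)) - ⟪G t, u⟫ * (⟪G t, u⟫ * D (Φ (c t)))) / ρ (Φ (c t)) ^ 2
          ≤ ‖u‖ ^ 2 := by
      intro t
      have h1 : ⟪A t u, u⟫ ≤ ρ (Φ (c t)) * ‖u‖ ^ 2 := by
        calc ⟪A t u, u⟫ ≤ ‖A t u‖ * ‖u‖ := real_inner_le_norm _ _
          _ ≤ (‖A t‖ * ‖u‖) * ‖u‖ := by
              have h0 := (A t).le_opNorm u
              nlinarith [norm_nonneg u]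
          _ ≤ (ρ (Φ (c t)) * ‖u‖) * ‖u‖ := by
              exact mul_le_mul_of_nonneg_right
                (mul_le_mul_of_nonneg_right (hHess (c t)) (norm_nonneg u)) (norm_nonneg u)
          _ = ρ (Φ (c t)) * ‖u‖ ^ 2 := by ring
      have h2 : 0 ≤ D (Φ (c t)) := hDnonneg _ (hΦnonneg _)
      have h3 : 0 < ρ (Φ (c t)) := hρcpos t
      rw [div_le_iff₀ (by positivity)]
      nlinarith [sq_nonneg ⟪G t, u⟫]
    -- h(t) ≤ h(0) + ‖u‖² t for t ≥ 0
    have hanti : Antitone (fun t => h t - ‖u‖ ^ 2 * t) := by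
      apply antitone_of_hasDerivAt_nonpos
        (f' := fun t =>
          (⟪A t u, u⟫ * ρ (Φ (c t)) - ⟪G t, u⟫ * (⟪G t, u⟫ * D (Φ (c t)))) / ρ (Φ (c t)) ^ 2
            - ‖u‖ ^ 2)
      · intro t
        exact ((hh t).sub (((hasDerivAt_id t).const_mul (‖u‖ ^ 2)))).congr_deriv (by simp only [mul_one])
      · intro t
        simp only [Pi.le_def]
        exact sub_nonpos.2 (hhbound t)
    have hhle : ∀ t : ℝ, 0 ≤ t → h t ≤ h 0 + ‖u‖ ^ 2 * t := by
      intro t ht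
      have := hanti ht
      simp only at this
      linarith
    -- g(t) = θ(Φ(c t)) has derivative h(t)
    have hg : ∀ t : ℝ, HasDerivAt (fun s => θ (Φ (c s))) (h t) t := by
      intro t
      have := (hθ' (Φ (c t)) (hΦnonneg _)).comp t (hΦc t)
      simpa [hhdef, div_eq_inv_mul, Function.comp_def] using this
    -- K(t) = g(t) - h(0) t - ‖u‖²/2 t² is antitone on [0,∞)
    set K : ℝ → ℝ := fun t => θ (Φ (c t)) - h 0 * t - ‖u‖ ^ 2 / 2 * t ^ 2 with hKdef
    have hK : ∀ t : ℝ, HasDerivAt K (h t - h 0 - ‖u‖ ^ 2 * t) t := by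
      intro t
      have h1 : HasDerivAt (fun s : ℝ => ‖u‖ ^ 2 / 2 * s ^ 2) (‖u‖ ^ 2 / 2 * (2 * t)) t := by
        simpa using (hasDerivAt_pow 2 t).const_mul (‖u‖ ^ 2 / 2)
      have := ((hg t).sub ((hasDerivAt_id t).const_mul (h 0))).sub h1
      exact this.congr_deriv (by ring)
    have hKanti : AntitoneOn K (Set.Ici 0) := by
      apply antitoneOn_of_hasDerivWithinAt_nonpos (convex_Ici 0)
        (f' := fun t => h t - h 0 - ‖u‖ ^ 2 * t)
      · exact fun t _ => (hK t).continuousAt.continuousWithinAt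
      · exact fun t _ => (hK t).hasDerivWithinAt
      · intro t ht
        rw [interior_Ici] at ht
        have := hhle t (le_of_lt ht)
        linarith
    have hfin := hKanti (Set.self_mem_Ici) (show (1:ℝ) ∈ Set.Ici 0 by norm_num) zero_le_one
    have hc1 : c 1 = w + u := by simp [hcdef]
    have hc0 : c 0 = w := by simp [hcdef]
    have hh0 : h 0 = ⟪gradient Φ w, u⟫ / ρ (Φ w) := by simp [hhdef, hGdef, hc0]
    simp only [hKdef, hc1, hc0, one_pow, mul_one, mul_zero, sub_zero, zero_pow] at hfin
    rw [hh0] at hfin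
    norm_num at hfin
    rw [show ⟪gradient Φ w, u⟫ = fderiv ℝ Φ w u from InnerProductSpace.toDual_symm_apply]
    linarith
  refine ⟨key, ?_⟩
  -- Part 2
  have hθmono : MonotoneOn θ (Set.Ici 0) := by
    apply monotoneOn_of_hasDerivWithinAt_nonneg (convex_Ici 0) (f' := fun z => 1 / ρ z)
    · exact fun z hz => (hθ' z hz).continuousAt.continuousWithinAt
    · intro z hz
      rw [interior_Ici] at hz
      exact (hθ' z (le_of_lt hz)).hasDerivWithinAt
    · intro z hz
      rw [interior_Ici] at hz
      exact le_of_lt (div_pos one_pos (hρpos z (le_of_lt hz)))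
  have hθnn : ∀ x : E, 0 ≤ θ (Φ x) := by
    intro x
    have := hθmono Set.self_mem_Ici (hΦnonneg x) (hΦnonneg x)
    rwa [hθ0] at this
  intro w
  have hRpos : 0 < ρ (Φ w) := hρpos _ (hΦnonneg w)
  have hRne : ρ (Φ w) ≠ 0 := hRpos.ne'
  have h1 := key w (-((ρ (Φ w))⁻¹ • gradient Φ w))
  have h2 : 0 ≤ θ (Φ (w + -((ρ (Φ w))⁻¹ • gradient Φ w))) := hθnn _
  have hip : ⟪gradient Φ w, -((ρ (Φ w))⁻¹ • gradient Φ w)⟫ / ρ (Φ w)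
      = -(‖gradient Φ w‖ ^ 2 * ((ρ (Φ w))⁻¹ * (ρ (Φ w))⁻¹)) := by
    rw [inner_neg_right, real_inner_smul_right, real_inner_self_eq_norm_sq]
    field_simp
  have hnm : ‖-((ρ (Φ w))⁻¹ • gradient Φ w)‖ ^ 2
      = ‖gradient Φ w‖ ^ 2 * ((ρ (Φ w))⁻¹ * (ρ (Φ w))⁻¹) := by
    rw [norm_neg, norm_smul]
    rw [Real.norm_eq_abs, abs_of_pos (inv_pos.2 hRpos)]
    ring
  rw [hip, hnm] at h1
  have h5 : ‖gradient Φ w‖ ^ 2 * ((ρ (Φ w))⁻¹ * (ρ (Φ w))⁻¹) ≤ 2 * θ (Φ w) := by linarith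
  have hsq : ‖gradient Φ w‖ ^ 2 ≤ 2 * ρ (Φ w) ^ 2 * θ (Φ w) := by
    have h6 : ‖gradient Φ w‖ ^ 2
        = (ρ (Φ w) * ρ (Φ w)) * (‖gradient Φ w‖ ^ 2 * ((ρ (Φ w))⁻¹ * (ρ (Φ w))⁻¹)) := by
      field_simp
    calc ‖gradient Φ w‖ ^ 2
        = (ρ (Φ w) * ρ (Φ w)) * (‖gradient Φ w‖ ^ 2 * ((ρ (Φ w))⁻¹ * (ρ (Φ w))⁻¹)) := h6
      _ ≤ (ρ (Φ w) * ρ (Φ w)) * (2 * θ (Φ w)) := by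
          exact mul_le_mul_of_nonneg_left h5 (by positivity)
      _ = 2 * ρ (Φ w) ^ 2 * θ (Φ w) := by ring
  calc ‖gradient Φ w‖ = Real.sqrt (‖gradient Φ w‖ ^ 2) :=
        (Real.sqrt_sq (norm_nonneg _)).symm
    _ ≤ Real.sqrt (ρ (Φ w) ^ 2 * (2 * θ (Φ w))) := by
        apply Real.sqrt_le_sqrt
        nlinarith [hsq]
    _ = Real.sqrt (ρ (Φ w) ^ 2) * Real.sqrt (2 * θ (Φ w)) :=
        Real.sqrt_mul (sq_nonneg _) _
    _ = ρ (Φ w) * Real.sqrt (2 * θ (Φ w)) := by rw [Real.sqrt_sq hRpos.le]
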